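/- For every integer n ≥ 2, one has (2/(ζ(n)·ξ(n−1)))^{1/(2n−2)} ≤ 2e/(n−1). -/

import Mathlib

/-- `ζ(k) = (((k−1)/2)!)²` for odd `k`, and `ζ(k) = (k/2)!((k−2)/2)!` for even `k`. -/
noncomputable def zeta (k : ℕ) : ℝ :=
  if k % 2 = 1 then ((((k - 1) / 2).factorial : ℝ)) ^ 2
  else ((k / 2).factorial : ℝ) * (((k - 2) / 2).factorial : ℝ)

/-- `ξ(1) = 1/2`, `ξ(k) = ((k−1)/2)!((k−3)/2)!/4` for odd `k ≥ 3`, and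
`ξ(k) = (((k−2)/2)!)²/4` for even `k`. -/
noncomputable def xi (k : ℕ) : ℝ :=
  if k = 1 then 1 / 2
  else if k % 2 = 1 then (((k - 1) / 2).factorial : ℝ) * (((k - 3) / 2).factorial : ℝ) / 4
  else ((((k - 2) / 2).factorial : ℝ)) ^ 2 / 4

open Real


lemma sqrt_pi_le_stirling (n : ℕ) : Real.sqrt π ≤ Stirling.stirlingSeq (n + 1) :=
  Stirling.stirlingSeq'_antitone.le_of_tendsto
    (Stirling.tendsto_stirlingSeq_sqrt_pi.comp (Filter.tendsto_add_atTop_nat 1)) n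

lemma fact_lower (n : ℕ) :
    Real.sqrt π * (Real.sqrt (2 * (n+1) : ℝ) * (((n:ℝ)+1) / exp 1) ^ (n+1))
      ≤ ((n+1).factorial : ℝ) := by
  have h := sqrt_pi_le_stirling n
  rw [Stirling.stirlingSeq, le_div_iff₀ (by positivity)] at h
  push_cast at h ⊢
  linarith

lemma pairfact (k : ℕ) :
    2 * π * (((k:ℝ)+1) / exp 1) ^ (2*k+2) ≤ ((k+1).factorial : ℝ) * (k.factorial : ℝ) := by
  have h := fact_lower k
  have h2 : (Real.sqrt π * (Real.sqrt (2 * (k+1) : ℝ) * (((k:ℝ)+1) / exp 1) ^ (k+1)))^2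
      ≤ (((k+1).factorial : ℝ))^2 :=
    pow_le_pow_left₀ (by positivity) h 2
  have hsq1 : Real.sqrt π ^ 2 = π := Real.sq_sqrt pi_pos.le
  have hsq2 : Real.sqrt (2 * (k+1) : ℝ) ^ 2 = (2 * (k+1) : ℝ) := Real.sq_sqrt (by positivity)
  have hfac : (((k+1).factorial : ℝ))^2 = ((k:ℝ)+1) * (((k+1).factorial : ℝ) * (k.factorial : ℝ)) := by
    rw [Nat.factorial_succ]; push_cast; ring
  have hpow : ((((k:ℝ)+1) / exp 1) ^ (k+1))^2 = (((k:ℝ)+1) / exp 1) ^ (2*k+2) := by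
    rw [← pow_mul]; ring_nf
  rw [mul_pow, mul_pow, hsq1, hsq2, hpow, hfac] at h2
  have hk : (0:ℝ) < (k:ℝ)+1 := by positivity
  nlinarith [pow_nonneg (by positivity : (0:ℝ) ≤ ((k:ℝ)+1)/exp 1) (2*k+2), pi_pos]

lemma core_odd (c : ℕ) :
    2 * ((((2*c+1:ℕ):ℝ)+1) / (2 * exp 1)) ^ (2*(2*c+1+1)) ≤ zeta (2*c+3) * xi (2*c+2) := by
  have hE : (0:ℝ) < exp 1 := exp_pos 1
  have hz : zeta (2*c+3) = (((c+1).factorial : ℝ))^2 := by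
    rw [zeta, if_pos (by omega : (2*c+3) % 2 = 1), show (2*c+3-1)/2 = c+1 from by omega]
  have hx : xi (2*c+2) = ((c.factorial : ℝ))^2 / 4 := by
    rw [xi, if_neg (by omega : ¬ 2*c+2 = 1), if_neg (by omega : ¬ (2*c+2) % 2 = 1),
      show (2*c+2-2)/2 = c from by omega]
  rw [hz, hx]
  have hbase : (((2*c+1:ℕ):ℝ)+1) / (2 * exp 1) = ((c:ℝ)+1)/exp 1 := by
    push_cast; field_simp; ring
  rw [hbase, show 2*(2*c+1+1) = (2*c+2)*2 from by ring, pow_mul]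
  have hF := pairfact c
  have hx0 : (0:ℝ) ≤ (((c:ℝ)+1)/exp 1)^(2*c+2) := by positivity
  have hpi2 : (0:ℝ) ≤ π^2 - 9 := by nlinarith [pi_gt_three]
  nlinarith [mul_self_le_mul_self (by positivity : (0:ℝ) ≤ 2*π*(((c:ℝ)+1)/exp 1)^(2*c+2)) hF,
    mul_nonneg hpi2 (mul_nonneg hx0 hx0)]

lemma core_even (d : ℕ) :
    2 * ((((2*d+2:ℕ):ℝ)+1) / (2 * exp 1)) ^ (2*(2*d+2+1)) ≤ zeta (2*d+4) * xi (2*d+3) := by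
  have hE : (0:ℝ) < exp 1 := exp_pos 1
  set D : ℝ := (d:ℝ) with hD
  have hD0 : (0:ℝ) ≤ D := Nat.cast_nonneg d
  have hz : zeta (2*d+4) = ((d+2).factorial : ℝ) * ((d+1).factorial : ℝ) := by
    rw [zeta, if_neg (by omega : ¬ (2*d+4) % 2 = 1),
      show (2*d+4)/2 = d+2 from by omega, show (2*d+4-2)/2 = d+1 from by omega]
  have hx : xi (2*d+3) = ((d+1).factorial : ℝ) * (d.factorial : ℝ) / 4 := by
    rw [xi, if_neg (by omega : ¬ 2*d+3 = 1), if_pos (by omega : (2*d+3) % 2 = 1),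
      show (2*d+3-1)/2 = d+1 from by omega, show (2*d+3-3)/2 = d from by omega]
  rw [hz, hx]
  have hbase : (((2*d+2:ℕ):ℝ)+1) / (2 * exp 1) = (2*D+3)/(2*exp 1) := by push_cast; rw [hD]; ring_nf
  rw [hbase, show 2*(2*d+2+1) = 2*(2*d+3) from by ring]
  set A : ℝ := (D+2)/exp 1 with hA
  set B : ℝ := (D+1)/exp 1 with hB
  set q : ℝ := (D+1)*(D+2) with hq
  have hqpos : (0:ℝ) < q := by positivity
  have hApos : (0:ℝ) < A := by positivity
  have hBpos : (0:ℝ) < B := by positivity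
  -- step 1 : base^2 = A*B*(1+1/(4q))
  have hC : ((2*D+3)/(2*exp 1))^2 = (A*B) * (1 + 1/(4*q)) := by
    rw [hA, hB, hq]; field_simp; ring
  -- step 2 : (1+1/(4q))^(2d+3) ≤ e
  have hexp : (1 + 1/(4*q))^(2*d+3) ≤ exp 1 := by
    calc (1 + 1/(4*q))^(2*d+3) ≤ (exp (1/(4*q)))^(2*d+3) := by
          apply pow_le_pow_left₀ (by positivity)
          linarith [add_one_le_exp (1/(4*q))]
      _ = exp ((2*d+3 : ℕ) * (1/(4*q))) := (exp_nat_mul _ _).symm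
      _ ≤ exp 1 := by
          apply exp_le_exp.2
          rw [mul_one_div, div_le_one (by positivity)]
          push_cast
          nlinarith
  have hmain : ((2*D+3)/(2*exp 1))^(2*(2*d+3)) ≤ (A*B)^(2*d+3) * exp 1 := by
    rw [pow_mul, hC, mul_pow]
    exact mul_le_mul_of_nonneg_left hexp (by positivity)
  -- step 3 : 2 * (A*B)^(2d+3) * e ≤ π^2 * A^(2d+4) * B^(2d+2)
  have hstep3 : 2 * ((A*B)^(2*d+3) * exp 1) ≤ π^2 * (A^(2*d+4) * B^(2*d+2)) := by
    have h1 : (A*B)^(2*d+3) = (A^(2*d+3) * B^(2*d+2)) * B := by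
      rw [mul_pow, pow_succ B (2*d+2)]; ring
    have h2 : A^(2*d+4) * B^(2*d+2) = (A^(2*d+3) * B^(2*d+2)) * A := by
      rw [pow_succ A (2*d+3)]; ring
    rw [h1, h2]
    have hkey : 2 * (B * exp 1) ≤ π^2 * A := by
      rw [hA, hB, div_mul_cancel₀ _ (ne_of_gt hE), ← mul_div_assoc, le_div_iff₀ hE]
      have ha : 2*(D+1) * exp 1 ≤ 2*(D+1) * 2.7182818286 :=
        mul_le_mul_of_nonneg_left exp_one_lt_d9.le (by linarith)
      have hb : (0:ℝ) ≤ (π^2 - 9) * (D+2) :=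
        mul_nonneg (by nlinarith [pi_gt_three]) (by linarith)
      nlinarith
    calc 2 * ((A^(2*d+3) * B^(2*d+2)) * B * exp 1)
        = (A^(2*d+3) * B^(2*d+2)) * (2 * (B * exp 1)) := by ring
      _ ≤ (A^(2*d+3) * B^(2*d+2)) * (π^2 * A) :=
          mul_le_mul_of_nonneg_left hkey (by positivity)
      _ = π^2 * ((A^(2*d+3) * B^(2*d+2)) * A) := by ring
  -- step 4 : factorial lower bounds
  have hFA : 2 * π * A^(2*d+4) ≤ ((d+2).factorial : ℝ) * ((d+1).factorial : ℝ) := by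
    have := pairfact (d+1)
    have e1 : (((d+1:ℕ):ℝ)+1)/exp 1 = A := by rw [hA]; push_cast; ring
    rw [e1, show 2*(d+1)+2 = 2*d+4 from by ring] at this
    exact this
  have hFB : 2 * π * B^(2*d+2) ≤ ((d+1).factorial : ℝ) * (d.factorial : ℝ) := by
    have := pairfact d
    rw [show ((d:ℕ):ℝ)+1 = D+1 from by rw[hD]] at this
    exact this
  have hprod : (2 * π * A^(2*d+4)) * (2 * π * B^(2*d+2)) ≤
      (((d+2).factorial : ℝ) * ((d+1).factorial : ℝ)) * (((d+1).factorial : ℝ) * (d.factorial : ℝ)) :=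
    mul_le_mul hFA hFB (by positivity) (by positivity)
  have hpi0 : (0:ℝ) < π := pi_pos
  calc 2 * ((2*D+3)/(2*exp 1))^(2*(2*d+3))
      ≤ 2 * ((A*B)^(2*d+3) * exp 1) := by linarith [hmain]
    _ ≤ π^2 * (A^(2*d+4) * B^(2*d+2)) := hstep3
    _ = (2 * π * A^(2*d+4)) * (2 * π * B^(2*d+2)) / 4 := by ring
    _ ≤ (((d+2).factorial : ℝ) * ((d+1).factorial : ℝ)) * (((d+1).factorial : ℝ) * (d.factorial : ℝ)) / 4 := by
        linarith [hprod]
    _ = ((d+2).factorial : ℝ) * ((d+1).factorial : ℝ) * (((d+1).factorial : ℝ) * (d.factorial : ℝ) / 4) := by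
        ring

lemma core (m : ℕ) :
    2 * (((m:ℝ)+1) / (2 * exp 1)) ^ (2*(m+1)) ≤ zeta (m+2) * xi (m+1) := by
  rcases Nat.even_or_odd m with ⟨c, rfl⟩ | ⟨c, rfl⟩
  · rcases c with _ | d
    · -- m = 0
      have hz : zeta 2 = 1 := by norm_num [zeta]
      have hx : xi 1 = 1/2 := by norm_num [xi]
      norm_num [hz, hx]
      have h2 : (1:ℝ) ≤ exp 1 := by linarith [add_one_le_exp (1:ℝ)]
      have h3 : (exp 1)⁻¹ ≤ 1 := inv_le_one_of_one_le₀ h2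
      have h4 : (0:ℝ) ≤ (exp 1)⁻¹ := by positivity
      nlinarith
    · rw [show d+1+(d+1) = 2*d+2 from by ring,
        show 2*d+2+2 = 2*d+4 from by ring, show 2*d+2+1 = 2*d+3 from by ring]
      exact core_even d
  · rw [show 2*c+1+2 = 2*c+3 from by ring, show 2*c+1+1 = 2*c+2 from by ring]
    exact core_odd c


/-- **Lemma A.1.**  For every integer `n ≥ 2`,
`(2/(ζ(n) ξ(n−1)))^{1/(2n−2)} ≤ 2e/(n−1)`. -/
theorem zeta_xi_bound (n : ℕ) (hn : 2 ≤ n) :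
    (2 / (zeta n * xi (n - 1))) ^ (1 / (2 * (n : ℝ) - 2))
      ≤ 2 * Real.exp 1 / ((n : ℝ) - 1) := by
  obtain ⟨m, rfl⟩ : ∃ m, n = m + 2 := ⟨n - 2, by omega⟩
  rw [show m + 2 - 1 = m + 1 from by omega]
  have hE : (0:ℝ) < exp 1 := exp_pos 1
  have hcore := core m
  set P := zeta (m+2) * xi (m+1) with hPdef
  have hP : 0 < P := lt_of_lt_of_le (by positivity) hcore
  have hm1 : (0:ℝ) < (m:ℝ)+1 := by positivity
  have hBpos : (0:ℝ) < 2*exp 1/((m:ℝ)+1) := by positivity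
  have hABone : (((m:ℝ)+1)/(2*exp 1)) * (2*exp 1/((m:ℝ)+1)) = 1 := by
    field_simp
  have h2 : 2/P ≤ (2*exp 1/((m:ℝ)+1))^(2*(m+1)) := by
    rw [div_le_iff₀ hP]
    calc (2:ℝ) = (2 * (((m:ℝ)+1)/(2*exp 1))^(2*(m+1))) * (2*exp 1/((m:ℝ)+1))^(2*(m+1)) := by
          rw [mul_assoc, ← mul_pow, hABone, one_pow, mul_one]
      _ ≤ P * (2*exp 1/((m:ℝ)+1))^(2*(m+1)) :=
          mul_le_mul_of_nonneg_right hcore (by positivity)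
      _ = (2*exp 1/((m:ℝ)+1))^(2*(m+1)) * P := mul_comm _ _
  have h2' : 2/P ≤ (2*exp 1/((m:ℝ)+1)) ^ (((2*(m+1):ℕ)):ℝ) := by
    rw [Real.rpow_natCast]; exact h2
  have hden : (0:ℝ) < 2 * ((m+2:ℕ):ℝ) - 2 := by push_cast; linarith [Nat.cast_nonneg (α := ℝ) m]
  have key := Real.rpow_le_rpow (by positivity : (0:ℝ) ≤ 2/P) h2'
    (le_of_lt (by positivity : (0:ℝ) < 1/(2 * ((m+2:ℕ):ℝ) - 2)))
  rw [← Real.rpow_mul hBpos.le] at key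
  have hone : ((2*(m+1):ℕ):ℝ) * (1/(2 * ((m+2:ℕ):ℝ) - 2)) = 1 := by
    rw [mul_one_div, div_eq_one_iff_eq (ne_of_gt hden)]
    push_cast; ring
  rw [hone, Real.rpow_one] at key
  have hrhs : ((m+2:ℕ):ℝ) - 1 = (m:ℝ)+1 := by push_cast; ring
  rw [hrhs]
  exact key
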